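/- For n ≥ 5, the commutator subgroup B_n' of the braid group B_n is generated by the n−2 elements σ_1σ_i^{−1} for 2 ≤ i ≤ n−1. -/

import Mathlib

/-- Artin braid relators for the braid group on `n` strands, with generators
`FreeGroup.of i` corresponding to `σ_{i+1}` for `i : Fin (n-1)`. -/
def braidRels (n : ℕ) : Set (FreeGroup (Fin (n - 1))) :=
  {r | ∃ i j : Fin (n - 1),
      ((j : ℕ) ≥ (i : ℕ) + 2 ∧
        r = FreeGroup.of i * FreeGroup.of j * (FreeGroup.of i)⁻¹ * (FreeGroup.of j)⁻¹) ∨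
      ((j : ℕ) = (i : ℕ) + 1 ∧
        r = FreeGroup.of i * FreeGroup.of j * FreeGroup.of i *
          (FreeGroup.of j * FreeGroup.of i * FreeGroup.of j)⁻¹)}

/-- The braid group on `n` strands. -/
def BraidGroup (n : ℕ) : Type := PresentedGroup (braidRels n)

instance (n : ℕ) : Group (BraidGroup n) :=
  inferInstanceAs (Group (PresentedGroup (braidRels n)))

/-- The Artin generator `σ_i` of `BraidGroup n`, for `1 ≤ i ≤ n-1` (junk value `1` otherwise). -/
def σ {n : ℕ} (i : ℕ) : BraidGroup n :=
  if h : 1 ≤ i ∧ i < n then PresentedGroup.of (⟨i - 1, by omega⟩ : Fin (n - 1)) else 1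

/-- The element `α = σ_1 σ_2 ⋯ σ_{n-1}`. -/
def α (n : ℕ) : BraidGroup n := ((List.range (n - 1)).map (fun i => σ (i + 1))).prod

/-- The half-twist `σ_j` for an index `j` taken modulo `n`, defined by conjugating
`σ_1` by the rotation `α`: `σ_{1+m} = α^m σ_1 α^{-m}`. -/
def σm {n : ℕ} (j : ℤ) : BraidGroup n := (α n) ^ (j - 1) * σ 1 * (α n) ^ (1 - j)

open scoped commutatorElement

namespace BraidAux

/-! ### Pure group-theoretic identities -/

section PureGroup
variable {G : Type*} [Group G] {a b : G}

lemma braid_conj2 (h : a * b * a = b * a * b) : b * a * b⁻¹ = a⁻¹ * b * a := by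
  calc b * a * b⁻¹ = a⁻¹ * ((a * b * a) * b⁻¹) := by group
    _ = a⁻¹ * ((b * a * b) * b⁻¹) := by rw [h]
    _ = a⁻¹ * b * a := by group

lemma braid_conj3 (h : a * b * a = b * a * b) : a * b⁻¹ * a⁻¹ = b⁻¹ * a⁻¹ * b := by
  calc a * b⁻¹ * a⁻¹ = b⁻¹ * ((b * a * b⁻¹) * a⁻¹) := by group
    _ = b⁻¹ * ((a⁻¹ * b * a) * a⁻¹) := by rw [braid_conj2 h]
    _ = b⁻¹ * a⁻¹ * b := by group

lemma braid_commutator (h : a * b * a = b * a * b) : a * b⁻¹ = ⁅a, a * b⁆ := by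
  have i1 : a * b * a⁻¹ = b⁻¹ * a * b := by
    calc a * b * a⁻¹ = b⁻¹ * ((b * a * b) * a⁻¹) := by group
      _ = b⁻¹ * ((a * b * a) * a⁻¹) := by rw [← h]
      _ = b⁻¹ * a * b := by group
  calc a * b⁻¹ = a * ((b⁻¹ * a * b) * (b⁻¹ * a⁻¹)) := by group
    _ = a * ((a * b * a⁻¹) * (b⁻¹ * a⁻¹)) := by rw [i1]
    _ = a * (a * b) * a⁻¹ * (a * b)⁻¹ := by group
    _ = ⁅a, a * b⁆ := (commutatorElement_def _ _).symm

end PureGroup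

/-! ### Braid relations -/

variable {n : ℕ}

lemma mk_rel_eq_one {r : FreeGroup (Fin (n - 1))} (h : r ∈ braidRels n) :
    (PresentedGroup.mk (braidRels n) r : BraidGroup n) = 1 :=
  (QuotientGroup.eq_one_iff r).2 (Subgroup.subset_normalClosure h)

lemma σ_def {i : ℕ} (h1 : 1 ≤ i) (h2 : i < n) :
    (σ i : BraidGroup n) = PresentedGroup.of (⟨i - 1, by omega⟩ : Fin (n - 1)) := by
  rw [σ]; exact dif_pos ⟨h1, h2⟩

lemma of_comm {a b : Fin (n - 1)} (h : (b : ℕ) ≥ (a : ℕ) + 2) :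
    (PresentedGroup.of a : BraidGroup n) * PresentedGroup.of b =
      PresentedGroup.of b * PresentedGroup.of a := by
  have h1 : (PresentedGroup.mk (braidRels n)
      (FreeGroup.of a * FreeGroup.of b * (FreeGroup.of a)⁻¹ * (FreeGroup.of b)⁻¹) :
      BraidGroup n) = 1 := mk_rel_eq_one ⟨a, b, Or.inl ⟨h, rfl⟩⟩
  simp only [map_mul, map_inv] at h1
  rw [mul_assoc, ← mul_inv_rev, mul_inv_eq_one] at h1
  exact h1

lemma of_braid {a b : Fin (n - 1)} (h : (b : ℕ) = (a : ℕ) + 1) :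
    (PresentedGroup.of a : BraidGroup n) * PresentedGroup.of b * PresentedGroup.of a =
      PresentedGroup.of b * PresentedGroup.of a * PresentedGroup.of b := by
  have h1 : (PresentedGroup.mk (braidRels n)
      (FreeGroup.of a * FreeGroup.of b * FreeGroup.of a *
        (FreeGroup.of b * FreeGroup.of a * FreeGroup.of b)⁻¹) : BraidGroup n) = 1 :=
    mk_rel_eq_one ⟨a, b, Or.inr ⟨h, rfl⟩⟩
  simp only [map_mul, map_inv] at h1
  rw [mul_inv_eq_one] at h1
  exact h1

lemma σ_comm {i j : ℕ} (h1 : 1 ≤ i) (hij : i + 2 ≤ j) (hj : j < n) :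
    Commute (σ i : BraidGroup n) (σ j) := by
  show (σ i : BraidGroup n) * σ j = σ j * σ i
  rw [σ_def h1 (by omega), σ_def (by omega) hj]
  exact of_comm (by simp only []; omega)

lemma σ_braid {i : ℕ} (h1 : 1 ≤ i) (hi : i + 1 < n) :
    (σ i : BraidGroup n) * σ (i + 1) * σ i = σ (i + 1) * σ i * σ (i + 1) := by
  rw [σ_def h1 (by omega), σ_def (by omega) hi]
  exact of_braid (by simp only []; omega)

lemma σ_braid12 (hn : 5 ≤ n) :
    (σ 1 : BraidGroup n) * σ 2 * σ 1 = σ 2 * σ 1 * σ 2 := by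
  have := σ_braid (n := n) (i := 1) le_rfl (by omega)
  norm_num at this
  exact this

/-! ### The subgroup H -/

def Hs (n : ℕ) : Subgroup (BraidGroup n) :=
  Subgroup.closure {x : BraidGroup n | ∃ i, 2 ≤ i ∧ i ≤ n - 1 ∧ x = σ 1 * (σ i)⁻¹}

lemma gen_mem {i : ℕ} (hi1 : 2 ≤ i) (hi2 : i ≤ n - 1) :
    (σ 1 : BraidGroup n) * (σ i)⁻¹ ∈ Hs n :=
  Subgroup.subset_closure ⟨i, hi1, hi2, rfl⟩

lemma memA1 {p : ℕ} (hp1 : 1 ≤ p) (hp2 : p ≤ n - 1) :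
    (σ 1 : BraidGroup n) * (σ p)⁻¹ ∈ Hs n := by
  rcases eq_or_lt_of_le hp1 with h | h
  · rw [← h, mul_inv_cancel]; exact one_mem _
  · exact gen_mem h hp2

lemma memA (hn : 5 ≤ n) {p q : ℕ} (hp1 : 1 ≤ p) (hp2 : p ≤ n - 1)
    (hq1 : 1 ≤ q) (hq2 : q ≤ n - 1) : (σ p : BraidGroup n) * (σ q)⁻¹ ∈ Hs n := by
  have h : (σ p : BraidGroup n) * (σ q)⁻¹ =
      (σ 1 * (σ p)⁻¹)⁻¹ * (σ 1 * (σ q)⁻¹) := by group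
  rw [h]
  exact mul_mem (inv_mem (memA1 hp1 hp2)) (memA1 hq1 hq2)

lemma memB1 (hn : 5 ≤ n) : (σ 1 : BraidGroup n)⁻¹ * σ 2 ∈ Hs n := by
  have c14 : Commute (σ 1 : BraidGroup n) (σ 4) := σ_comm le_rfl (by omega) (by omega)
  have c24 : Commute (σ 2 : BraidGroup n) (σ 4) := σ_comm (by omega) (by omega) (by omega)
  have hb := σ_braid12 (n := n) hn
  have d1 : (σ 4 : BraidGroup n)⁻¹ * σ 1 = σ 1 * (σ 4)⁻¹ := c14.symm.inv_left.eq
  have d2 : (σ 2 : BraidGroup n)⁻¹ * σ 4 = σ 4 * (σ 2)⁻¹ := c24.inv_left.eq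
  have ii := braid_conj2 hb
  have key : (σ 1 : BraidGroup n)⁻¹ * σ 2 =
      (σ 2 * (σ 4)⁻¹) * ((σ 1 * (σ 2)⁻¹) * (σ 4 * (σ 1)⁻¹)) := by
    symm
    calc (σ 2 * (σ 4)⁻¹) * ((σ 1 * (σ 2)⁻¹) * ((σ 4 : BraidGroup n) * (σ 1)⁻¹))
        = σ 2 * (((σ 4)⁻¹ * σ 1) * ((σ 2)⁻¹ * σ 4)) * (σ 1)⁻¹ := by group
      _ = σ 2 * ((σ 1 * (σ 4)⁻¹) * (σ 4 * (σ 2)⁻¹)) * (σ 1)⁻¹ := by rw [d1, d2]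
      _ = (σ 2 * σ 1 * (σ 2)⁻¹) * (σ 1)⁻¹ := by group
      _ = ((σ 1)⁻¹ * σ 2 * σ 1) * (σ 1)⁻¹ := by rw [ii]
      _ = (σ 1)⁻¹ * σ 2 := by group
  rw [key]
  exact mul_mem (memA hn (by omega) (by omega) (by omega) (by omega))
    (mul_mem (gen_mem (by omega) (by omega))
      (memA hn (by omega) (by omega) (by omega) (by omega)))

lemma memB1' (hn : 5 ≤ n) {p : ℕ} (hp1 : 1 ≤ p) (hp2 : p ≤ n - 1) :
    (σ p : BraidGroup n)⁻¹ * σ 1 ∈ Hs n := by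
  rcases Nat.lt_or_ge p 3 with h3 | h3
  · interval_cases p
    · rw [inv_mul_cancel]; exact one_mem _
    · have h : (σ 2 : BraidGroup n)⁻¹ * σ 1 = ((σ 1)⁻¹ * σ 2)⁻¹ := by group
      rw [h]; exact inv_mem (memB1 hn)
  · have c : Commute (σ 1 : BraidGroup n) (σ p) := σ_comm le_rfl (by omega) (by omega)
    rw [c.symm.inv_left.eq]
    exact memA1 hp1 hp2

lemma memB1'' (hn : 5 ≤ n) {q : ℕ} (hq1 : 1 ≤ q) (hq2 : q ≤ n - 1) :
    (σ 1 : BraidGroup n)⁻¹ * σ q ∈ Hs n := by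
  rcases Nat.lt_or_ge q 3 with h3 | h3
  · interval_cases q
    · rw [inv_mul_cancel]; exact one_mem _
    · exact memB1 hn
  · have c : Commute (σ 1 : BraidGroup n) (σ q) := σ_comm le_rfl (by omega) (by omega)
    rw [c.inv_left.eq]
    exact memA hn (by omega) hq2 le_rfl (by omega)

lemma memB (hn : 5 ≤ n) {p q : ℕ} (hp1 : 1 ≤ p) (hp2 : p ≤ n - 1)
    (hq1 : 1 ≤ q) (hq2 : q ≤ n - 1) : (σ p : BraidGroup n)⁻¹ * σ q ∈ Hs n := by
  have h : (σ p : BraidGroup n)⁻¹ * σ q = ((σ p)⁻¹ * σ 1) * ((σ 1)⁻¹ * σ q) := by group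
  rw [h]
  exact mul_mem (memB1' hn hp1 hp2) (memB1'' hn hq1 hq2)

end BraidAux
namespace BraidAux
variable {n : ℕ}

lemma conj1 (hn : 5 ≤ n) {i : ℕ} (hi1 : 2 ≤ i) (hi2 : i ≤ n - 1) :
    (σ 1 : BraidGroup n) * (σ 1 * (σ i)⁻¹) * (σ 1)⁻¹ ∈ Hs n := by
  rcases Nat.lt_or_ge i 3 with h3 | h3
  · interval_cases i
    have hb := σ_braid12 (n := n) hn
    have iii := braid_conj3 hb
    have key : (σ 1 : BraidGroup n) * (σ 1 * (σ 2)⁻¹) * (σ 1)⁻¹ =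
        (σ 1 * (σ 2)⁻¹) * ((σ 1)⁻¹ * σ 2) := by
      calc (σ 1 : BraidGroup n) * (σ 1 * (σ 2)⁻¹) * (σ 1)⁻¹
          = σ 1 * (σ 1 * (σ 2)⁻¹ * (σ 1)⁻¹) := by group
        _ = σ 1 * ((σ 2)⁻¹ * (σ 1)⁻¹ * σ 2) := by rw [iii]
        _ = (σ 1 * (σ 2)⁻¹) * ((σ 1)⁻¹ * σ 2) := by group
    rw [key]
    exact mul_mem (gen_mem (by omega) (by omega)) (memB1 hn)
  · have c : Commute (σ 1 : BraidGroup n) (σ i) := σ_comm le_rfl (by omega) (by omega)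
    have d : (σ i : BraidGroup n)⁻¹ * (σ 1)⁻¹ = (σ 1)⁻¹ * (σ i)⁻¹ := c.inv_inv.symm.eq
    have key : (σ 1 : BraidGroup n) * (σ 1 * (σ i)⁻¹) * (σ 1)⁻¹ = σ 1 * (σ i)⁻¹ := by
      calc (σ 1 : BraidGroup n) * (σ 1 * (σ i)⁻¹) * (σ 1)⁻¹
          = σ 1 * σ 1 * ((σ i)⁻¹ * (σ 1)⁻¹) := by group
        _ = σ 1 * σ 1 * ((σ 1)⁻¹ * (σ i)⁻¹) := by rw [d]
        _ = σ 1 * (σ i)⁻¹ := by group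
    rw [key]
    exact memA1 (by omega) hi2

lemma conj_gen (hn : 5 ≤ n) {j i : ℕ} (hj1 : 1 ≤ j) (hj2 : j ≤ n - 1)
    (hi1 : 2 ≤ i) (hi2 : i ≤ n - 1) :
    (σ j : BraidGroup n) * (σ 1 * (σ i)⁻¹) * (σ j)⁻¹ ∈ Hs n ∧
      (σ j : BraidGroup n)⁻¹ * (σ 1 * (σ i)⁻¹) * σ j ∈ Hs n := by
  constructor
  · have split : (σ j : BraidGroup n) * (σ 1 * (σ i)⁻¹) * (σ j)⁻¹ =
        (σ j * (σ 1)⁻¹) * ((σ 1 * (σ 1 * (σ i)⁻¹) * (σ 1)⁻¹) * (σ 1 * (σ j)⁻¹)) := by group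
    rw [split]
    exact mul_mem (memA hn hj1 hj2 le_rfl (by omega))
      (mul_mem (conj1 hn hi1 hi2) (memA hn le_rfl (by omega) hj1 hj2))
  · have split : (σ j : BraidGroup n)⁻¹ * (σ 1 * (σ i)⁻¹) * σ j =
        ((σ j)⁻¹ * σ 1) * (((σ 1)⁻¹ * σ i)⁻¹ * ((σ 1)⁻¹ * σ j)) := by group
    rw [split]
    exact mul_mem (memB1' hn hj1 hj2)
      (mul_mem (inv_mem (memB1'' hn (by omega) hi2)) (memB1'' hn hj1 hj2))

lemma top_gen (g : BraidGroup n) :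
    g ∈ Subgroup.closure {x : BraidGroup n | ∃ i, 1 ≤ i ∧ i ≤ n - 1 ∧ x = σ i} := by
  refine PresentedGroup.generated_by (braidRels n) _ (fun j => ?_) g
  have hj := j.isLt
  refine Subgroup.subset_closure ⟨(j : ℕ) + 1, by omega, by omega, ?_⟩
  rw [σ_def (by omega) (by omega)]
  rfl

lemma Hs_normal (hn : 5 ≤ n) : (Hs n).Normal := by
  constructor
  intro h hh g
  have hgen := top_gen (n := n) g
  have main : ∀ h' ∈ Hs n, g * h' * g⁻¹ ∈ Hs n ∧ g⁻¹ * h' * g ∈ Hs n := by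
    refine Subgroup.closure_induction
      (p := fun g _ => ∀ h' ∈ Hs n, g * h' * g⁻¹ ∈ Hs n ∧ g⁻¹ * h' * g ∈ Hs n)
      ?_ ?_ ?_ ?_ hgen
    · rintro x ⟨k, hk1, hk2, rfl⟩ h' hh'
      refine Subgroup.closure_induction
        (p := fun h' _ => σ k * h' * (σ k)⁻¹ ∈ Hs n ∧ (σ k)⁻¹ * h' * σ k ∈ Hs n)
        ?_ ?_ ?_ ?_ hh'
      · rintro y ⟨i, hi1, hi2, rfl⟩
        exact conj_gen hn hk1 hk2 hi1 hi2
      · refine ⟨?_, ?_⟩ <;> simpa using one_mem (Hs n)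
      · intro u v hu hv pu pv
        have e1 : σ k * (u * v) * (σ k : BraidGroup n)⁻¹ =
            (σ k * u * (σ k)⁻¹) * (σ k * v * (σ k)⁻¹) := by group
        have e2 : (σ k : BraidGroup n)⁻¹ * (u * v) * σ k =
            ((σ k)⁻¹ * u * σ k) * ((σ k)⁻¹ * v * σ k) := by group
        exact ⟨by rw [e1]; exact mul_mem pu.1 pv.1, by rw [e2]; exact mul_mem pu.2 pv.2⟩
      · intro u hu pu
        have e1 : σ k * u⁻¹ * (σ k : BraidGroup n)⁻¹ = (σ k * u * (σ k)⁻¹)⁻¹ := by group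
        have e2 : (σ k : BraidGroup n)⁻¹ * u⁻¹ * σ k = ((σ k)⁻¹ * u * σ k)⁻¹ := by group
        exact ⟨by rw [e1]; exact inv_mem pu.1, by rw [e2]; exact inv_mem pu.2⟩
    · intro h' hh'
      constructor <;> simpa using hh'
    · intro x y hx hy px py h' hh'
      constructor
      · have e : x * y * h' * (x * y)⁻¹ = x * (y * h' * y⁻¹) * x⁻¹ := by group
        rw [e]; exact (px _ ((py h' hh').1)).1
      · have e : (x * y)⁻¹ * h' * (x * y) = y⁻¹ * (x⁻¹ * h' * x) * y := by group
        rw [e]; exact (py _ ((px h' hh').2)).2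
    · intro x hx px h' hh'
      constructor
      · rw [inv_inv]; exact (px h' hh').2
      · rw [inv_inv]; exact (px h' hh').1
  exact (main h hh).1

lemma Hs_le_commutator (hn : 5 ≤ n) : Hs n ≤ commutator (BraidGroup n) := by
  have aux : ∀ i : ℕ, 1 ≤ i → i ≤ n - 1 →
      (σ 1 : BraidGroup n) * (σ i)⁻¹ ∈ commutator (BraidGroup n) := by
    intro i
    induction i with
    | zero => exact fun h => absurd h (by omega)
    | succ k ih =>
      intro _ hk2
      rcases Nat.eq_zero_or_pos k with hk0 | hk1
      · subst hk0
        show (σ 1 : BraidGroup n) * (σ 1)⁻¹ ∈ _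
        rw [mul_inv_cancel]; exact one_mem _
      · have hb : (σ k : BraidGroup n) * σ (k + 1) * σ k = σ (k + 1) * σ k * σ (k + 1) :=
          σ_braid hk1 (by omega)
        have hcom := braid_commutator hb
        have split : (σ 1 : BraidGroup n) * (σ (k + 1))⁻¹ =
            (σ 1 * (σ k)⁻¹) * (σ k * (σ (k + 1))⁻¹) := by group
        have hmem : ⁅(σ k : BraidGroup n), σ k * σ (k + 1)⁆ ∈ commutator (BraidGroup n) := by
          rw [commutator_def]
          exact Subgroup.commutator_mem_commutator (Subgroup.mem_top _) (Subgroup.mem_top _)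
        rw [split, hcom]
        exact mul_mem (ih hk1 (by omega)) hmem
  rw [Hs, Subgroup.closure_le]
  rintro x ⟨i, hi1, hi2, rfl⟩
  exact aux i (by omega) hi2

lemma commutator_le_Hs (hn : 5 ≤ n) : commutator (BraidGroup n) ≤ Hs n := by
  haveI := Hs_normal hn
  rw [commutator_def, Subgroup.commutator_le]
  intro a _ b _
  have key : ∀ x : BraidGroup n,
      (QuotientGroup.mk' (Hs n)) x ∈ Subgroup.zpowers ((QuotientGroup.mk' (Hs n)) (σ 1)) := by
    intro x
    have hx := top_gen (n := n) x
    have hle : Subgroup.closure {x : BraidGroup n | ∃ i, 1 ≤ i ∧ i ≤ n - 1 ∧ x = σ i} ≤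
        (Subgroup.zpowers ((QuotientGroup.mk' (Hs n)) (σ 1))).comap (QuotientGroup.mk' (Hs n)) := by
      rw [Subgroup.closure_le]
      rintro y ⟨i, hi1, hi2, rfl⟩
      have heq : (QuotientGroup.mk' (Hs n)) (σ i) = (QuotientGroup.mk' (Hs n)) (σ 1) := by
        rw [QuotientGroup.mk'_eq_mk']
        exact ⟨(σ i)⁻¹ * σ 1, memB hn hi1 hi2 le_rfl (by omega), by group⟩
      exact Subgroup.mem_comap.mpr (heq ▸ Subgroup.mem_zpowers _)
    exact hle hx
  have hcomm : Commute ((QuotientGroup.mk' (Hs n)) a) ((QuotientGroup.mk' (Hs n)) b) := by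
    obtain ⟨ka, hka⟩ := Subgroup.mem_zpowers_iff.mp (key a)
    obtain ⟨kb, hkb⟩ := Subgroup.mem_zpowers_iff.mp (key b)
    rw [← hka, ← hkb]
    exact (Commute.refl _).zpow_zpow ka kb
  have h1 : (QuotientGroup.mk' (Hs n)) ⁅a, b⁆ = 1 := by
    rw [map_commutatorElement]
    exact commutatorElement_eq_one_iff_commute.mpr hcomm
  rw [← QuotientGroup.ker_mk' (Hs n)]
  exact MonoidHom.mem_ker.mpr h1

end BraidAux

theorem commutator_generated (n : ℕ) (hn : 5 ≤ n) :
    Subgroup.closure {x : BraidGroup n | ∃ i, 2 ≤ i ∧ i ≤ n - 1 ∧ x = σ 1 * (σ i)⁻¹} =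
      commutator (BraidGroup n) :=
  le_antisymm (BraidAux.Hs_le_commutator hn) (BraidAux.commutator_le_Hs hn)
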